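/- Let n ≥ 7 and let ℱ be an independent set of flags of type {1,n−3} of [n] containing flags (A₁,B₁) and (A₂,B₂) with A₁ = A₂, B₁ ≠ B₂, and |[n] \ (B₁ ∪ B₂)| = 2. Then every singleton A ⊆ [n] \ (B₁ ∪ B₂) has ℱ-weight at most C(n−1,3) − (n−5)(n−4) + C(n−5,2). -/

import Mathlib

open Finset

/-- The ground set `[n] = {1,…,n}`. -/
def Iv (n : ℕ) : Finset ℕ := Finset.Icc 1 n

/-- A flag of type `{a,b}` of `[n]`: a pair `(A,B)` with `A ⊆ B ⊆ [n]`, `|A| = a`, `|B| = b`. -/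
def IsFlag (n a b : ℕ) (f : Finset ℕ × Finset ℕ) : Prop :=
  f.1 ⊆ f.2 ∧ f.2 ⊆ Iv n ∧ f.1.card = a ∧ f.2.card = b

/-- Opposition of flags `(A₁,B₁)`, `(A₂,B₂)`: `B₁ ∪ B₂ = [n]`, `A₁ ∩ B₂ = ∅`, `A₂ ∩ B₁ = ∅`. -/
def OppFlag (n : ℕ) (f g : Finset ℕ × Finset ℕ) : Prop :=
  f.2 ∪ g.2 = Iv n ∧ f.1 ∩ g.2 = ∅ ∧ g.1 ∩ f.2 = ∅

/-- An independent (EKR) set of flags: pairwise non-opposite. -/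
def Indep (n : ℕ) (F : Finset (Finset ℕ × Finset ℕ)) : Prop :=
  ∀ f ∈ F, ∀ g ∈ F, ¬ OppFlag n f g

/-- The `ℱ`-weight of a `b`-set `B`: the number of flags in `ℱ` with second component `B`. -/
def weightB (F : Finset (Finset ℕ × Finset ℕ)) (B : Finset ℕ) : ℕ :=
  (F.filter (fun f => f.2 = B)).card

/-- The `ℱ`-weight of an `a`-set `A`: the number of flags in `ℱ` with first component `A`. -/
def weightA (F : Finset (Finset ℕ × Finset ℕ)) (A : Finset ℕ) : ℕ :=
  (F.filter (fun f => f.1 = A)).card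

/-- A maximal independent set of flags of type `{a,b}`. -/
def MaximalIndep (n a b : ℕ) (F : Finset (Finset ℕ × Finset ℕ)) : Prop :=
  (∀ f ∈ F, IsFlag n a b f) ∧ Indep n F ∧
    (∀ f, IsFlag n a b f → Indep n (insert f F) → f ∈ F)

/-- if an independent set `ℱ` of flags of type `{1,n−3}` (`n ≥ 7`)
contains `(A₁,B₁)`, `(A₂,B₂)` with `A₁ = A₂`, `B₁ ≠ B₂`, `|[n] \ (B₁ ∪ B₂)| = 2`,
then every singleton `A ⊆ [n] \ (B₁ ∪ B₂)` has weight at most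
`C(n−1,3) − (n−5)(n−4) + C(n−5,2)`. -/
lemma aux_count (s : Finset ℕ) (a : ℕ) (ha : a ∉ s) (k : ℕ) :
    ((Finset.powersetCard (k+1) (insert a s)).filter (fun C => a ∈ C)).card
      = s.card.choose k := by
  have himg : ((Finset.powersetCard (k+1) (insert a s)).filter (fun C => a ∈ C))
      = (Finset.powersetCard k s).image (insert a) := by
    ext C
    simp only [Finset.mem_filter, Finset.mem_powersetCard, Finset.mem_image]
    constructor
    · rintro ⟨⟨hsub, hcard⟩, haC⟩
      refine ⟨C.erase a, ⟨?_, ?_⟩, Finset.insert_erase haC⟩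
      · intro x hx
        rcases Finset.mem_insert.mp (hsub (Finset.mem_of_mem_erase hx)) with h | h
        · exact absurd h (Finset.ne_of_mem_erase hx)
        · exact h
      · rw [Finset.card_erase_of_mem haC, hcard]; rfl
    · rintro ⟨D, ⟨hsub, hcard⟩, rfl⟩
      have haD : a ∉ D := fun h => ha (hsub h)
      exact ⟨⟨Finset.insert_subset_insert a hsub,
        by rw [Finset.card_insert_of_notMem haD, hcard]⟩, Finset.mem_insert_self a D⟩
  rw [himg, Finset.card_image_of_injOn, Finset.card_powersetCard]
  intro C hC D hD h
  simp only [Finset.mem_coe, Finset.mem_powersetCard] at hC hD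
  have hac : a ∉ C := fun h' => ha (hC.1 h')
  have had : a ∉ D := fun h' => ha (hD.1 h')
  rw [← Finset.erase_insert hac, ← Finset.erase_insert had, h]

lemma aux_key : ∀ m : ℕ, (m+2).choose 2 + (m+2)*(m+3) ≤ (m+6).choose 3 := by
  intro m
  induction m with
  | zero => decide
  | succ k ih =>
    have h1 : (k+1+6).choose 3 = (k+6).choose 2 + (k+6).choose 3 := by
      rw [show k+1+6 = (k+6)+1 from by ring]
      exact Nat.choose_succ_succ (k+6) 2
    have h2 : (k+1+2).choose 2 = (k+2) + (k+2).choose 2 := by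
      rw [show k+1+2 = (k+2)+1 from by ring]
      rw [Nat.choose_succ_succ (k+2) 1, Nat.choose_one_right]
    have h3 : 3*k + 8 ≤ (k+6).choose 2 := by
      rw [Nat.choose_two_right, Nat.le_div_iff_mul_le (by norm_num)]
      have : k + 6 - 1 = k + 5 := by omega
      rw [this]; nlinarith
    rw [h1, h2]
    nlinarith

lemma aux_two_mul (k : ℕ) : 2 * (k+1).choose 2 = k * (k+1) := by
  rw [Nat.choose_two_right]
  have : k + 1 - 1 = k := rfl
  rw [this, mul_comm (k+1) k, Nat.mul_div_cancel' (Nat.even_mul_succ_self k).two_dvd]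

theorem stmt_10 (n : ℕ) (hn : 7 ≤ n)
    (F : Finset (Finset ℕ × Finset ℕ)) (hflags : ∀ f ∈ F, IsFlag n 1 (n - 3) f)
    (hindep : Indep n F)
    (f₁ f₂ : Finset ℕ × Finset ℕ) (hf₁ : f₁ ∈ F) (hf₂ : f₂ ∈ F)
    (hA : f₁.1 = f₂.1) (hBne : f₁.2 ≠ f₂.2)
    (hcompl : (Iv n \ (f₁.2 ∪ f₂.2)).card = 2)
    (A : Finset ℕ) (hA1 : A.card = 1) (hAsub : A ⊆ Iv n \ (f₁.2 ∪ f₂.2)) :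
    weightA F A ≤ Nat.choose (n - 1) 3 - (n - 5) * (n - 4) + Nat.choose (n - 5) 2 := by
  obtain ⟨hs1, hs2, hc1A, hc1B⟩ := hflags f₁ hf₁
  obtain ⟨hs3, hs4, hc2A, hc2B⟩ := hflags f₂ hf₂
  obtain ⟨a₀, ha₀⟩ := Finset.card_eq_one.mp hc1A
  have hIv : (Iv n).card = n := by simp [Iv]
  have ha₀B₁ : a₀ ∈ f₁.2 := hs1 (ha₀ ▸ Finset.mem_singleton_self a₀)
  have ha₀B₂ : a₀ ∈ f₂.2 := hs3 ((hA ▸ ha₀) ▸ Finset.mem_singleton_self a₀)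
  -- A is disjoint from B₁ and B₂
  have hdA : ∀ x ∈ A, x ∉ f₁.2 ∧ x ∉ f₂.2 := by
    intro x hx
    have := Finset.mem_sdiff.mp (hAsub hx)
    constructor
    · exact fun h => this.2 (Finset.mem_union_left _ h)
    · exact fun h => this.2 (Finset.mem_union_right _ h)
  have hAIv : A ⊆ Iv n := fun x hx => (Finset.mem_sdiff.mp (hAsub hx)).1
  -- predicates
  set P := Finset.powersetCard 3 (Iv n \ A) with hPdef
  -- Step 1 : injection into P.filter (¬(p₁ ∨ p₂))
  have hstep1 : weightA F A ≤
      (P.filter (fun C => ¬((C ⊆ f₁.2 ∧ a₀ ∈ C) ∨ (C ⊆ f₂.2 ∧ a₀ ∈ C)))).card := by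
    apply Finset.card_le_card_of_injOn (fun f => Iv n \ f.2)
    · intro f hf
      obtain ⟨hfF, hfA⟩ := Finset.mem_filter.mp hf
      obtain ⟨hf1, hf2, hfc1, hfc2⟩ := hflags f hfF
      rw [Finset.mem_coe, Finset.mem_filter]
      constructor
      · rw [hPdef, Finset.mem_powersetCard]
        constructor
        · exact Finset.sdiff_subset_sdiff (le_refl _) (hfA ▸ hf1)
        · rw [Finset.card_sdiff_of_subset hf2, hIv, hfc2]; omega
      · rintro (⟨hCB, haC⟩ | ⟨hCB, haC⟩)
        · apply hindep f hfF f₁ hf₁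
          refine ⟨?_, ?_, ?_⟩
          · apply Finset.Subset.antisymm (Finset.union_subset hf2 hs2)
            intro x hx
            by_cases h : x ∈ f.2
            · exact Finset.mem_union_left _ h
            · exact Finset.mem_union_right _ (hCB (Finset.mem_sdiff.mpr ⟨hx, h⟩))
          · rw [hfA, Finset.eq_empty_iff_forall_notMem]
            intro x hx
            obtain ⟨hx1, hx2⟩ := Finset.mem_inter.mp hx
            exact (hdA x hx1).1 hx2
          · rw [ha₀, Finset.singleton_inter_of_notMem (Finset.mem_sdiff.mp haC).2]
        · apply hindep f hfF f₂ hf₂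
          refine ⟨?_, ?_, ?_⟩
          · apply Finset.Subset.antisymm (Finset.union_subset hf2 hs4)
            intro x hx
            by_cases h : x ∈ f.2
            · exact Finset.mem_union_left _ h
            · exact Finset.mem_union_right _ (hCB (Finset.mem_sdiff.mpr ⟨hx, h⟩))
          · rw [hfA, Finset.eq_empty_iff_forall_notMem]
            intro x hx
            obtain ⟨hx1, hx2⟩ := Finset.mem_inter.mp hx
            exact (hdA x hx1).2 hx2
          · rw [← hA, ha₀, Finset.singleton_inter_of_notMem (Finset.mem_sdiff.mp haC).2]
    · intro f hf g hg h
      simp only [Finset.mem_coe, Finset.mem_filter] at hf hg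
      have hf2 : f.2 ⊆ Iv n := (hflags f hf.1).2.1
      have hg2 : g.2 ⊆ Iv n := (hflags g hg.1).2.1
      have : f.2 = g.2 := by
        have := congrArg (fun s => Iv n \ s) h
        simpa [Finset.sdiff_sdiff_eq_self hf2, Finset.sdiff_sdiff_eq_self hg2] using this
      exact Prod.ext (hf.2.trans hg.2.symm) this
  -- cardinalities
  have hPcard : P.card = (n-1).choose 3 := by
    rw [hPdef, Finset.card_powersetCard, Finset.card_sdiff_of_subset hAIv, hIv, hA1]
  have hT : ∀ B : Finset ℕ, a₀ ∈ B → B ⊆ Iv n → (∀ x ∈ A, x ∉ B) →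
      (P.filter (fun C => C ⊆ B ∧ a₀ ∈ C)).card = (B.card - 1).choose 2 := by
    intro B haB hBIv hAB
    have heq : P.filter (fun C => C ⊆ B ∧ a₀ ∈ C)
        = (Finset.powersetCard 3 B).filter (fun C => a₀ ∈ C) := by
      ext C
      simp only [hPdef, Finset.mem_filter, Finset.mem_powersetCard]
      constructor
      · rintro ⟨⟨_, hc⟩, hsub, haC⟩; exact ⟨⟨hsub, hc⟩, haC⟩
      · rintro ⟨⟨hsub, hc⟩, haC⟩
        refine ⟨⟨?_, hc⟩, hsub, haC⟩
        intro x hx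
        exact Finset.mem_sdiff.mpr ⟨hBIv (hsub hx), fun hxA => hAB x hxA (hsub hx)⟩
    have h2 := aux_count (B.erase a₀) a₀ (Finset.notMem_erase a₀ B) 2
    rw [Finset.insert_erase haB, Finset.card_erase_of_mem haB] at h2
    rw [heq, h2]
  have hT1 : (P.filter (fun C => C ⊆ f₁.2 ∧ a₀ ∈ C)).card = (n-4).choose 2 := by
    rw [hT f₁.2 ha₀B₁ hs2 (fun x hx => (hdA x hx).1), hc1B]
    congr 1
  have hT2 : (P.filter (fun C => C ⊆ f₂.2 ∧ a₀ ∈ C)).card = (n-4).choose 2 := by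
    rw [hT f₂.2 ha₀B₂ hs4 (fun x hx => (hdA x hx).2), hc2B]
    congr 1
  -- card of intersection B₁ ∩ B₂
  have hUsub : f₁.2 ∪ f₂.2 ⊆ Iv n := Finset.union_subset hs2 hs4
  have hUcard : (f₁.2 ∪ f₂.2).card = n - 2 := by
    have := Finset.card_sdiff_of_subset hUsub
    have hle := Finset.card_le_card hUsub
    rw [hIv] at this hle
    omega
  have hIcard : (f₁.2 ∩ f₂.2).card = n - 4 := by
    have := Finset.card_union_add_card_inter f₁.2 f₂.2
    rw [hUcard, hc1B, hc2B] at this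
    omega
  have hT12 : (P.filter (fun C => (C ⊆ f₁.2 ∧ a₀ ∈ C) ∧ (C ⊆ f₂.2 ∧ a₀ ∈ C))).card
      = (n-5).choose 2 := by
    have heq : P.filter (fun C => (C ⊆ f₁.2 ∧ a₀ ∈ C) ∧ (C ⊆ f₂.2 ∧ a₀ ∈ C))
        = P.filter (fun C => C ⊆ f₁.2 ∩ f₂.2 ∧ a₀ ∈ C) := by
      apply Finset.filter_congr
      intro C _
      constructor
      · rintro ⟨⟨h1, h2⟩, ⟨h3, _⟩⟩; exact ⟨Finset.subset_inter h1 h3, h2⟩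
      · rintro ⟨h1, h2⟩
        exact ⟨⟨h1.trans Finset.inter_subset_left, h2⟩,
               ⟨h1.trans Finset.inter_subset_right, h2⟩⟩
    rw [heq, hT (f₁.2 ∩ f₂.2) (Finset.mem_inter.mpr ⟨ha₀B₁, ha₀B₂⟩)
      (Finset.inter_subset_left.trans hs2) (fun x hx h => (hdA x hx).1 (Finset.mem_inter.mp h).1),
      hIcard]
    congr 1
  -- union / complement bookkeeping
  have hsplit := Finset.card_filter_add_card_filter_not
    (s := P) (p := fun C => (C ⊆ f₁.2 ∧ a₀ ∈ C) ∨ (C ⊆ f₂.2 ∧ a₀ ∈ C))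
  have hunion : (P.filter (fun C => (C ⊆ f₁.2 ∧ a₀ ∈ C) ∨ (C ⊆ f₂.2 ∧ a₀ ∈ C))).card
      + (n-5).choose 2 = 2 * (n-4).choose 2 := by
    rw [Finset.filter_or]
    have := Finset.card_union_add_card_inter
      (P.filter (fun C => C ⊆ f₁.2 ∧ a₀ ∈ C)) (P.filter (fun C => C ⊆ f₂.2 ∧ a₀ ∈ C))
    rw [← Finset.filter_and, hT1, hT2, hT12] at this
    omega
  -- numeric facts
  obtain ⟨m, rfl⟩ : ∃ m, n = m + 7 := ⟨n - 7, by omega⟩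
  have e1 : m + 7 - 1 = m + 6 := by omega
  have e4 : m + 7 - 4 = m + 3 := by omega
  have e5 : m + 7 - 5 = m + 2 := by omega
  simp only [e1, e4, e5] at hPcard hunion ⊢
  have hmul : 2 * (m+3).choose 2 = (m+2) * (m+3) := aux_two_mul (m+2)
  have hkey := aux_key m
  generalize hq : (m+2) * (m+3) = q at hmul hkey ⊢
  omega
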